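/- Let (a, B_a) be a Lie superalgebra over char 2 with odd NIS B_a, D an even derivation with B_a(D(a),b) + B_a(a,D(b)) = 0 for all a,b. Then g := Kx ⊕ a ⊕ Ke (x odd, e even) with bracket [x,g] = 0, [a,b]_g := [a,b]_a + B_a(D(a),b)x, [a,e]_g := D(a), and squaring s_g(a + μx) := s_a(a), is a Lie superalgebra, and the form B_g extending B_a with B_g(x,e) = 1, B_g(x,x) = B_g(e,e) = 0, a ⊥ x, a ⊥ e, is an odd, non-degenerate, invariant, 0̄-antisymmetric form on g. -/

import Mathlib

/-- the `D`-extension (`x` odd, `e` even) of a Lie superalgebra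
`(a, B_a)` in characteristic 2 with an odd NIS `B_a` by an even derivation `D` with
`B(Da,b) + B(a,Db) = 0` is again a Lie superalgebra `g = Kx ⊕ a ⊕ Ke`, and the
extended form `B_g` is odd, non-degenerate, invariant and 0̄-antisymmetric. The
space is modeled as `K × V × K` with `x = (1,0,0)` odd and `e = (0,0,1)` even. -/
theorem stmt19 {K V : Type*} [Field K] [CharP K 2]
    [AddCommGroup V] [Module K V]
    (g0 g1 : Submodule K V) (hcompl : IsCompl g0 g1)
    (br : V →ₗ[K] V →ₗ[K] V) (sq : V → V)
    -- Lie superalgebra axioms on `a`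
    (halt : ∀ u : V, br u u = 0)
    (hjac : ∀ u v w : V, br u (br v w) + br v (br w u) + br w (br u v) = 0)
    (hbr00 : ∀ x ∈ g0, ∀ y ∈ g0, br x y ∈ g0)
    (hbr01 : ∀ x ∈ g0, ∀ y ∈ g1, br x y ∈ g1)
    (hbr11 : ∀ x ∈ g1, ∀ y ∈ g1, br x y ∈ g0)
    (hsqmem : ∀ x ∈ g1, sq x ∈ g0)
    (hsqsmul : ∀ (c : K), ∀ x ∈ g1, sq (c • x) = (c * c) • sq x)
    (hsqpol : ∀ x ∈ g1, ∀ y ∈ g1, sq (x + y) + sq x + sq y = br x y)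
    (hsqjac : ∀ x ∈ g1, ∀ y : V, br (sq x) y = br x (br x y))
    -- odd NIS `B` on `a`: non-degenerate, invariant, symmetric (0̄-antisymmetric), odd
    (B : V →ₗ[K] V →ₗ[K] K)
    (hBnd : ∀ x, (∀ y, B x y = 0) → x = 0)
    (hBinv : ∀ x y z, B (br x y) z = B x (br y z))
    (hBsym : ∀ x y, B x y = B y x)
    (hBodd00 : ∀ x ∈ g0, ∀ y ∈ g0, B x y = 0)
    (hBodd11 : ∀ x ∈ g1, ∀ y ∈ g1, B x y = 0)
    -- the even derivation `D`
    (D : V →ₗ[K] V)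
    (hD0 : ∀ x ∈ g0, D x ∈ g0) (hD1 : ∀ x ∈ g1, D x ∈ g1)
    (hDbr : ∀ x y, D (br x y) = br (D x) y + br x (D y))
    (hDsq : ∀ x ∈ g1, D (sq x) = br (D x) x)
    (hDskew : ∀ x y, B (D x) y + B x (D y) = 0)
    -- the extension data on `K × V × K` (`x = (1,0,0)` odd, `e = (0,0,1)` even)
    (brG : (K × V × K) → (K × V × K) → (K × V × K))
    (hbrG : ∀ u v, brG u v =
      (B (D u.2.1) v.2.1, br u.2.1 v.2.1 + u.2.2 • D v.2.1 + v.2.2 • D u.2.1, 0))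
    (sG : (K × V × K) → (K × V × K))
    (hsG : ∀ u, sG u = (0, sq u.2.1, 0))
    (BG : (K × V × K) → (K × V × K) → K)
    (hBG : ∀ u v, BG u v = B u.2.1 v.2.1 + u.1 * v.2.2 + u.2.2 * v.1)
    (G0 G1 : Set (K × V × K))
    (hG0 : G0 = {u | u.1 = 0 ∧ u.2.1 ∈ g0})
    (hG1 : G1 = {u | u.2.1 ∈ g1 ∧ u.2.2 = 0}) :
    -- `g` is a Lie superalgebra
    (∀ u, brG u u = 0) ∧
    (∀ u v w, brG u (brG v w) + brG v (brG w u) + brG w (brG u v) = 0) ∧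
    (∀ u ∈ G1, sG u ∈ G0) ∧
    (∀ (c : K), ∀ u ∈ G1, sG (c • u) = (c * c) • sG u) ∧
    (∀ u ∈ G1, ∀ v ∈ G1, sG (u + v) + sG u + sG v = brG u v) ∧
    (∀ u ∈ G1, ∀ v, brG (sG u) v = brG u (brG u v)) ∧
    -- `B_g` is odd, non-degenerate, invariant, 0̄-antisymmetric (i.e. symmetric)
    (∀ u, (∀ v, BG u v = 0) → u = 0) ∧
    (∀ u v w, BG (brG u v) w = BG u (brG v w)) ∧
    (∀ u v, BG u v = BG v u) ∧
    (∀ u ∈ G0, ∀ v ∈ G0, BG u v = 0) ∧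
    (∀ u ∈ G1, ∀ v ∈ G1, BG u v = 0) := by
  have htwo : (2 : K) = 0 := by
    have := CharP.cast_eq_zero K 2
    exact_mod_cast this
  have haddK : ∀ c : K, c + c = 0 := fun c => by linear_combination c * htwo
  have haddV : ∀ v : V, v + v = 0 := fun v => by
    rw [← two_smul K v, htwo, zero_smul]
  have hswap : ∀ x y : V, br x y = br y x := by
    intro x y
    have h := halt (x + y)
    simp only [map_add, LinearMap.add_apply, halt, zero_add, add_zero] at h
    have h' : br x y + br y x = 0 := by rw [add_comm]; exact h
    calc br x y = br x y + (br y x + br y x) := by rw [haddV, add_zero]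
      _ = (br x y + br y x) + br y x := by abel
      _ = br y x := by rw [h', zero_add]
  have hskewEq : ∀ x y : V, B (D x) y = B x (D y) := by
    intro x y
    linear_combination hDskew x y - (B x (D y)) * htwo
  have hBDself : ∀ u : V, B (D u) u = 0 := by
    intro u
    obtain ⟨p, q, hp, hq, hpq⟩ := Submodule.codisjoint_iff_exists_add_eq.mp hcompl.codisjoint u
    have e1 : B (D p) p = 0 := hBodd00 _ (hD0 p hp) _ hp
    have e2 : B (D q) q = 0 := hBodd11 _ (hD1 q hq) _ hq
    have e3 : B (D p) q = B (D q) p := by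
      rw [hskewEq p q, hBsym]
    rw [← hpq]
    simp only [map_add, LinearMap.add_apply]
    rw [e1, e2, e3]
    linear_combination haddK (B (D q) p)
  have hT : ∀ u v w : V, B (D u) (br v w)
      = B u (br (D v) w) + B u (br v (D w)) := by
    intro u v w
    rw [hskewEq, hDbr, map_add]
  have hfirst : ∀ u v w : V,
      B (D u) (br v w) + B (D v) (br w u) + B (D w) (br u v) = 0 := by
    intro u v w
    have h1 := hT u v w
    have h2 : B (D v) (br w u) = B u (br (D v) w) := by
      rw [← hBinv (D v) w u, hBsym]
    have h3 : B (D w) (br u v) = B u (br v (D w)) := by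
      rw [← hBinv u v (D w), hBsym]
    rw [h1, h2, h3]
    linear_combination haddK (B u (br (D v) w) + B u (br v (D w)))
  have h2z : ∀ t : V, (2 : ℤ) • t = 0 := by
    intro t; rw [two_zsmul]; exact haddV t
  refine ⟨?_, ?_, ?_, ?_, ?_, ?_, ?_, ?_, ?_, ?_, ?_⟩
  · -- alternating
    intro u
    rw [hbrG]
    refine Prod.ext ?_ (Prod.ext ?_ ?_) <;> simp [halt, hBDself, haddV]
  · -- Jacobi
    intro u v w
    simp only [hbrG]
    refine Prod.ext ?_ (Prod.ext ?_ ?_)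
    · simp only [Prod.fst_add, Prod.snd_add, map_add, map_smul, LinearMap.add_apply,
        LinearMap.smul_apply, smul_eq_mul, Prod.fst_zero]
      linear_combination hfirst u.2.1 v.2.1 w.2.1
        + w.2.2 * hBsym (D u.2.1) (D v.2.1)
        + u.2.2 * hBsym (D v.2.1) (D w.2.1)
        + v.2.2 * hBsym (D w.2.1) (D u.2.1)
        + (w.2.2 * B (D v.2.1) (D u.2.1) + u.2.2 * B (D w.2.1) (D v.2.1)
          + v.2.2 * B (D u.2.1) (D w.2.1)) * htwo
    · simp only [Prod.fst_add, Prod.snd_add, map_add, map_smul, LinearMap.add_apply,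
        LinearMap.smul_apply, hDbr, smul_add, smul_smul, zero_smul, add_zero,
        Prod.snd_zero, Prod.fst_zero]
      rw [show br (D v.2.1) w.2.1 = br w.2.1 (D v.2.1) from hswap _ _,
        show br (D w.2.1) u.2.1 = br u.2.1 (D w.2.1) from hswap _ _,
        show br (D u.2.1) v.2.1 = br v.2.1 (D u.2.1) from hswap _ _]
      linear_combination (norm := module) hjac u.2.1 v.2.1 w.2.1
        + htwo • ((u.2.2 * v.2.2) • D (D w.2.1) + (u.2.2 * w.2.2) • D (D v.2.1)
          + (v.2.2 * w.2.2) • D (D u.2.1))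
        + htwo • (u.2.2 • (br v.2.1) (D w.2.1) + v.2.2 • (br w.2.1) (D u.2.1)
          + w.2.2 • (br u.2.1) (D v.2.1))
        + htwo • (u.2.2 • (br w.2.1) (D v.2.1) + v.2.2 • (br u.2.1) (D w.2.1)
          + w.2.2 • (br v.2.1) (D u.2.1))
    · simp
  · -- squaring maps G1 to G0
    intro u hu
    rw [hG1] at hu
    rw [hG0, hsG]
    exact ⟨rfl, hsqmem _ hu.1⟩
  · -- squaring scalar
    intro c u hu
    rw [hG1] at hu
    rw [hsG, hsG]
    refine Prod.ext ?_ (Prod.ext ?_ ?_) <;>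
      simp [hsqsmul c u.2.1 hu.1]
  · -- polarization
    intro u hu v hv
    rw [hG1] at hu hv
    rw [hsG, hsG, hsG, hbrG]
    refine Prod.ext ?_ (Prod.ext ?_ ?_)
    · simp [hBodd11 _ (hD1 _ hu.1) _ hv.1]
    · simp [hu.2, hv.2, hsqpol u.2.1 hu.1 v.2.1 hv.1]
    · simp
  · -- squaring Jacobi
    intro u hu v
    rw [hG1] at hu
    rw [hbrG, hbrG, hbrG, hsG]
    refine Prod.ext ?_ (Prod.ext ?_ ?_)
    · simp only [hu.2, zero_smul, add_zero, zero_add, map_add, map_smul, smul_eq_mul]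
      rw [hDsq u.2.1 hu.1, hBinv,
        hBodd11 _ (hD1 _ hu.1) _ (hD1 _ hu.1)]
      ring
    · simp only [hu.2, zero_smul, add_zero, zero_add, map_add, map_smul,
        LinearMap.add_apply, LinearMap.smul_apply]
      rw [hsqjac u.2.1 hu.1 v.2.1, hDsq u.2.1 hu.1,
        show br (D u.2.1) u.2.1 = br u.2.1 (D u.2.1) from hswap _ _]
    · rfl
  · -- nondegenerate
    intro u h
    have h1 := h (0, 0, 1)
    have h2 := h (1, 0, 0)
    rw [hBG] at h1 h2
    simp at h1 h2
    have h3 : u.2.1 = 0 := by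
      apply hBnd
      intro y
      have := h (0, y, 0)
      rw [hBG] at this
      simpa using this
    have : u = (u.1, u.2.1, u.2.2) := rfl
    rw [this, h1, h2, h3]
    rfl
  · -- invariance
    intro u v w
    rw [hbrG, hbrG, hBG, hBG]
    simp only [map_add, map_smul, LinearMap.add_apply, LinearMap.smul_apply,
      smul_eq_mul]
    linear_combination hBinv u.2.1 v.2.1 w.2.1
      + v.2.2 * hskewEq u.2.1 w.2.1 + w.2.2 * hskewEq u.2.1 v.2.1
  · -- symmetric
    intro u v
    rw [hBG, hBG]
    linear_combination hBsym u.2.1 v.2.1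
  · -- odd 00
    intro u hu v hv
    rw [hG0] at hu hv
    rw [hBG, hu.1, hv.1, hBodd00 _ hu.2 _ hv.2]
    ring
  · -- odd 11
    intro u hu v hv
    rw [hG1] at hu hv
    rw [hBG, hu.2, hv.2, hBodd11 _ hu.1 _ hv.1]
    ring
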